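/- In the Hecke algebra of a dihedral Coxeter system generated by $s, r$ with $m(s,r) = m < \infty$, define $Z_0 = 1$, $Z_{2k} = T_r T_s T_r \cdots$ ($k$ factors starting with $T_r$), and $Z_{2k-1} = T_s T_r T_s \cdots$ ($k$ factors starting with $T_s$). Then for every $n \geq 1$, the alternating product $(1+T_s)(1+T_r)(1+T_s)\cdots$ with $2n$ factors equals $\sum_{j=0}^{4n-1} p_{j,n} Z_j$ where each $p_{j,n} \in \mathbb{Z}[q]$ has degree strictly less than $n - \lfloor j/4 \rfloor$, and $p_{4n-1,n} = 1$. -/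

import Mathlib

open LaurentPolynomial

/-- The alternating products `Z_j` in the Hecke algebra of a dihedral system:
`Z 0 = 1`, `Z (2k) = T_r T_s T_r ⋯` (`k` factors starting with `T_r`),
`Z (2k-1) = T_s T_r T_s ⋯` (`k` factors starting with `T_s`). -/
noncomputable def Zel {H : Type*} [Monoid H] (Ts Tr : H) : ℕ → H := fun j =>
  if Odd j then (((List.range ((j + 1) / 2)).map (fun i => if Even i then Ts else Tr)).prod)
  else (((List.range (j / 2)).map (fun i => if Even i then Tr else Ts)).prod)

section ZelLemmas
variable {H : Type*} [Monoid H] (a b : H)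

lemma Zel_zero : Zel a b 0 = 1 := by simp [Zel]

lemma Zel_one : Zel a b 1 = a := by
  show (if Odd 1 then _ else _) = _
  norm_num [List.range_succ]

lemma Zel_two : Zel a b 2 = b := by
  show (if Odd 2 then _ else _) = _
  norm_num [Nat.odd_iff, List.range_succ]

lemma Zel_step (j : ℕ) :
    Zel a b (j+2) = Zel a b j * (if Even (j/2) then b else a) := by
  rcases Nat.even_or_odd j with h | h
  · obtain ⟨k, rfl⟩ := h
    have h1 : ¬ Odd (k + k + 2) := by simp [Nat.odd_iff]; omega
    have h2 : ¬ Odd (k + k) := by simp [Nat.odd_iff]; omega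
    have h3 : (k + k + 2)/2 = k + 1 := by omega
    have h4 : (k + k)/2 = k := by omega
    simp only [Zel, if_neg h1, if_neg h2, h3, h4, List.range_succ, List.map_append,
      List.prod_append, List.map_cons, List.map_nil, List.prod_cons, List.prod_nil, mul_one]
  · obtain ⟨k, rfl⟩ := h
    have h1 : Odd (2*k + 1 + 2) := by rw [Nat.odd_iff]; omega
    have h2 : Odd (2*k + 1) := by rw [Nat.odd_iff]; omega
    have h3 : (2*k + 1 + 2 + 1)/2 = k + 2 := by omega
    have h4 : (2*k + 1 + 1)/2 = k + 1 := by omega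
    have h5 : (2*k+1)/2 = k := by omega
    simp only [Zel, if_pos h1, if_pos h2, h3, h4, h5, List.range_succ, List.map_append,
      List.prod_append, List.map_cons, List.map_nil, List.prod_cons, List.prod_nil, mul_one]
    congr 1
    have : Even (k+1) ↔ ¬ Even k := by simp [Nat.even_add_one]
    rcases Nat.even_or_odd k with hk | hk
    · rw [if_neg (this.not_left.mpr (by simpa using hk)), if_pos hk]
    · rw [if_pos (this.mpr (Nat.not_even_iff_odd.mpr hk)), if_neg (Nat.not_even_iff_odd.mpr hk)]

lemma Zel_three : Zel a b 3 = a * b := by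
  have := Zel_step a b 1
  simpa [Zel_one] using this

lemma even_div2_iff (j : ℕ) : Even (j/2) ↔ j % 4 < 2 := by
  rw [Nat.even_iff]; omega

end ZelLemmas

section Hecke
variable {H : Type*} [Ring H] [Algebra (LaurentPolynomial ℤ) H]
variable (a b : H) (q : LaurentPolynomial ℤ)

lemma Zel_step_b (j : ℕ) (h : j % 4 < 2) : Zel a b (j+2) = Zel a b j * b := by
  rw [Zel_step, if_pos ((even_div2_iff j).mpr h)]

lemma Zel_step_a (j : ℕ) (h : 2 ≤ j % 4) : Zel a b (j+2) = Zel a b j * a := by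
  rw [Zel_step, if_neg (by rw [even_div2_iff]; omega)]

lemma expand0 (haa : a*a = q•(1:H) + (q-1)•a) (hbb : b*b = q•(1:H) + (q-1)•b) :
    Zel a b 0 * ((1+a)*(1+b)) =
      1•Zel a b 0 + 1•Zel a b 1 + 1•Zel a b 2 + 1•Zel a b 3 := by
  rw [Zel_zero, Zel_one, Zel_two, Zel_three]
  simp only [one_smul, one_mul]
  noncomm_ring

lemma expand1 (haa : a*a = q•(1:H) + (q-1)•a) (hbb : b*b = q•(1:H) + (q-1)•b) :
    Zel a b 1 * ((1+a)*(1+b)) =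
      q•Zel a b 0 + q•Zel a b 1 + q•Zel a b 2 + q•Zel a b 3 := by
  rw [Zel_zero, Zel_one, Zel_two, Zel_three]
  have expl : a * ((1+a)*(1+b)) = a + a*a + a*b + (a*a)*b := by noncomm_ring
  rw [expl, haa]
  have : (q•(1:H) + (q-1)•a) * b = q•b + (q-1)•(a*b) := by
    rw [add_mul, smul_mul_assoc, smul_mul_assoc, one_mul]
  rw [this]
  module

lemma expand23 (haa : a*a = q•(1:H) + (q-1)•a) (hbb : b*b = q•(1:H) + (q-1)•b)
    (k : ℕ) (hk2 : 2 ≤ k) (h : 2 ≤ k % 4) :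
    Zel a b k * ((1+a)*(1+b)) =
      q•Zel a b (k-2) + q•Zel a b k + 1•Zel a b (k+2) + 1•Zel a b (k+4) := by
  have hZk : Zel a b k = Zel a b (k-2) * b := by
    have := Zel_step_b a b (k-2) (by omega)
    rwa [show k-2+2 = k by omega] at this
  have hZp : Zel a b (k+2) = Zel a b k * a := Zel_step_a a b k h
  have hZpp : Zel a b (k+4) = Zel a b (k+2) * b := by
    have := Zel_step_b a b (k+2) (by omega)
    rwa [show k+2+2 = k+4 by omega] at this
  have expl : Zel a b k * ((1+a)*(1+b)) =
      Zel a b k + Zel a b k * a + Zel a b k * b + (Zel a b k * a) * b := by noncomm_ring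
  rw [expl, ← hZp, ← hZpp]
  have hZb : Zel a b k * b = q•Zel a b (k-2) + (q-1)•Zel a b k := by
    rw [hZk, mul_assoc, hbb, mul_add, mul_smul_comm, mul_smul_comm, mul_one, ← hZk]
  rw [hZb]
  module

lemma expand01 (haa : a*a = q•(1:H) + (q-1)•a) (hbb : b*b = q•(1:H) + (q-1)•b)
    (k : ℕ) (hk4 : 4 ≤ k) (h : k % 4 < 2) :
    Zel a b k * ((1+a)*(1+b)) =
      (q*q)•Zel a b (k-4) + (q*q)•Zel a b (k-2) + q•Zel a b k + q•Zel a b (k+2) := by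
  have hZm : Zel a b (k-2) = Zel a b (k-4) * b := by
    have := Zel_step_b a b (k-4) (by omega)
    rwa [show k-4+2 = k-2 by omega] at this
  have hZk : Zel a b k = Zel a b (k-2) * a := by
    have := Zel_step_a a b (k-2) (by omega)
    rwa [show k-2+2 = k by omega] at this
  have hZp : Zel a b (k+2) = Zel a b k * b := Zel_step_b a b k h
  have expl : Zel a b k * ((1+a)*(1+b)) =
      Zel a b k + Zel a b k * a + Zel a b k * b + (Zel a b k * a) * b := by noncomm_ring
  have hZa : Zel a b k * a = q•Zel a b (k-2) + (q-1)•Zel a b k := by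
    rw [hZk, mul_assoc, haa, mul_add, mul_smul_comm, mul_smul_comm, mul_one, ← hZk]
  have hZmb : Zel a b (k-2) * b = q•Zel a b (k-4) + (q-1)•Zel a b (k-2) := by
    rw [hZm, mul_assoc, hbb, mul_add, mul_smul_comm, mul_smul_comm, mul_one, ← hZm]
  rw [expl, hZa, ← hZp, add_mul, smul_mul_assoc, smul_mul_assoc, hZmb, ← hZp]
  module

end Hecke

/-- targets of the expansion of `Z k * (1+a)(1+b)` -/
def tg (k : ℕ) (i : ℕ) : ℕ :=
  if k ≤ 1 then i
  else if 2 ≤ k % 4 then k - 2 + 2*i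
  else k - 4 + 2*i

/-- coefficients of the expansion of `Z k * (1+a)(1+b)` -/
noncomputable def co (k : ℕ) (i : ℕ) : Polynomial ℤ :=
  if k = 0 then 1
  else if k = 1 then Polynomial.X
  else if 2 ≤ k % 4 then (if i ≤ 1 then Polynomial.X else 1)
  else (if i ≤ 1 then Polynomial.X^2 else Polynomial.X)

noncomputable def cpoly (k l : ℕ) : Polynomial ℤ :=
  ∑ i ∈ Finset.range 4, if l = tg k i then co k i else 0

lemma tg_le (k i : ℕ) (hi : i < 4) : tg k i ≤ k + 4 := by
  unfold tg; split_ifs <;> omega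

lemma cpoly_eq_zero (k l : ℕ) (h : k + 4 < l) : cpoly k l = 0 := by
  unfold cpoly
  refine Finset.sum_eq_zero fun i hi => ?_
  rw [if_neg]
  have := tg_le k i (Finset.mem_range.mp hi)
  omega

section Hecke2
variable {H : Type*} [Ring H] [Algebra (LaurentPolynomial ℤ) H]
variable (a b : H) (q : LaurentPolynomial ℤ)

lemma Zel_mul_G (hq : Polynomial.toLaurent (Polynomial.X : Polynomial ℤ) = q) (haa : a*a = q•(1:H) + (q-1)•a) (hbb : b*b = q•(1:H) + (q-1)•b)
    (k L : ℕ) (hL : k + 5 ≤ L) :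
    Zel a b k * ((1+a)*(1+b)) =
      ∑ l ∈ Finset.range L, (Polynomial.toLaurent (cpoly k l)) • Zel a b l := by
  have step1 : ∀ i : ℕ, i < 4 →
      (∑ l ∈ Finset.range L, (Polynomial.toLaurent (if l = tg k i then co k i else 0)) • Zel a b l)
        = (Polynomial.toLaurent (co k i)) • Zel a b (tg k i) := by
    intro i hi
    have : ∀ l, (Polynomial.toLaurent (if l = tg k i then co k i else 0)) • Zel a b l
        = if l = tg k i then (Polynomial.toLaurent (co k i)) • Zel a b l else 0 := by
      intro l; split_ifs with h <;> simp
    rw [Finset.sum_congr rfl (fun l _ => this l), Finset.sum_ite_eq' (Finset.range L) (tg k i)]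
    rw [if_pos (Finset.mem_range.mpr (by have := tg_le k i hi; omega))]
  have expand : (∑ l ∈ Finset.range L, (Polynomial.toLaurent (cpoly k l)) • Zel a b l)
      = ∑ i ∈ Finset.range 4, (Polynomial.toLaurent (co k i)) • Zel a b (tg k i) := by
    unfold cpoly
    rw [Finset.sum_congr rfl (fun l _ => by
      rw [map_sum, Finset.sum_smul])]
    rw [Finset.sum_comm]
    exact Finset.sum_congr rfl fun i hi => step1 i (Finset.mem_range.mp hi)
  rw [expand]
  rw [show (4:ℕ) = 3+1 from rfl, Finset.sum_range_succ, Finset.sum_range_succ,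
    Finset.sum_range_succ, Finset.sum_range_succ, Finset.sum_range_zero, zero_add]
  by_cases hk0 : k = 0
  · subst hk0
    simp only [tg, co, if_pos (by norm_num : (0:ℕ) ≤ 1)]
    norm_num
    rw [expand0 a b q haa hbb]
    simp
  by_cases hk1 : k = 1
  · subst hk1
    simp only [tg, co, if_pos (by norm_num : (1:ℕ) ≤ 1)]
    norm_num [hq]
    rw [expand1 a b q haa hbb]
  have hk2 : 2 ≤ k := by omega
  by_cases h4 : 2 ≤ k % 4
  · have htg : ∀ i, tg k i = k - 2 + 2*i := by
      intro i; unfold tg; rw [if_neg (by omega), if_pos h4]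
    have hco : ∀ i, co k i = if i ≤ 1 then Polynomial.X else 1 := by
      intro i; unfold co; rw [if_neg hk0, if_neg hk1, if_pos h4]
    simp only [htg, hco]
    norm_num [hq]
    rw [expand23 a b q haa hbb k hk2 h4]
    rw [show k - 2 + 2 = k by omega, show k - 2 + 2*2 = k + 2 by omega,
      show k - 2 + 2*3 = k + 4 by omega]
    simp [add_assoc]
  · have hk4 : 4 ≤ k := by omega
    have htg : ∀ i, tg k i = k - 4 + 2*i := by
      intro i; unfold tg; rw [if_neg (by omega), if_neg h4]
    have hco : ∀ i, co k i = if i ≤ 1 then Polynomial.X^2 else Polynomial.X := by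
      intro i; unfold co; rw [if_neg hk0, if_neg hk1, if_neg h4]
    simp only [htg, hco]
    norm_num [map_pow, hq, sq]
    rw [expand01 a b q haa hbb k hk4 (by omega)]
    rw [show k - 4 + 2 = k - 2 by omega, show k - 4 + 2*2 = k by omega,
      show k - 4 + 2*3 = k + 2 by omega]

end Hecke2

lemma sum_range_four {M : Type*} [AddCommMonoid M] (f : ℕ → M) :
    ∑ i ∈ Finset.range 4, f i = f 0 + f 1 + f 2 + f 3 := by
  rw [show (4:ℕ) = 3+1 from rfl, Finset.sum_range_succ, Finset.sum_range_succ,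
    Finset.sum_range_succ, Finset.sum_range_one]

noncomputable def pf : ℕ → ℕ → Polynomial ℤ
  | 0 => fun k => if k < 4 then 1 else 0
  | (n+1) => fun l => ∑ k ∈ Finset.range (4*n+4), pf n k * cpoly k l

lemma cpoly_top (ν : ℕ) : cpoly (4*ν+3) (4*ν+7) = 1 := by
  unfold cpoly
  rw [sum_range_four]
  have h4 : 2 ≤ (4*ν+3) % 4 := by omega
  have htg : ∀ i, tg (4*ν+3) i = 4*ν+1+2*i := fun i => by
    unfold tg; rw [if_neg (by omega), if_pos h4]; omega
  rw [htg, htg, htg, htg]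
  rw [if_neg (by omega), if_neg (by omega), if_neg (by omega), if_pos (by omega)]
  unfold co
  rw [if_neg (by omega), if_neg (by omega), if_pos h4, if_neg (by omega)]
  simp

lemma pf_top (ν : ℕ) : pf ν (4*ν+3) = 1 := by
  induction ν with
  | zero => simp [pf]
  | succ ν ih =>
    show (∑ k ∈ Finset.range (4*ν+4), pf ν k * cpoly k (4*(ν+1)+3)) = 1
    rw [Finset.sum_eq_single_of_mem (4*ν+3) (Finset.mem_range.mpr (by omega))]
    · rw [ih, one_mul, show 4*(ν+1)+3 = 4*ν+7 by omega, cpoly_top]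
    · intro x hx hne
      rw [cpoly_eq_zero x _ (by
        have := Finset.mem_range.mp hx; omega), mul_zero]

lemma co_deg_bound (k i : ℕ) (hi : i < 4) :
    (co k i).degree ≤ (((1 + k/4 - (tg k i)/4 : ℕ)) : WithBot ℕ) := by
  by_cases hk0 : k = 0
  · subst hk0
    have h1 : co 0 i = 1 := by unfold co; rw [if_pos rfl]
    have h2 : tg 0 i = i := by unfold tg; rw [if_pos (by omega)]
    rw [h1, h2, Polynomial.degree_one]
    exact_mod_cast (by omega : (0:ℕ) ≤ 1 + 0/4 - i/4)
  by_cases hk1 : k = 1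
  · subst hk1
    have h1 : co 1 i = Polynomial.X := by unfold co; rw [if_neg hk0, if_pos rfl]
    have h2 : tg 1 i = i := by unfold tg; rw [if_pos (by omega)]
    rw [h1, h2, Polynomial.degree_X]
    exact_mod_cast (by omega : (1:ℕ) ≤ 1 + 1/4 - i/4)
  by_cases h4 : 2 ≤ k % 4
  · have h2 : tg k i = k - 2 + 2*i := by unfold tg; rw [if_neg (by omega), if_pos h4]
    have h1 : co k i = if i ≤ 1 then Polynomial.X else 1 := by
      unfold co; rw [if_neg hk0, if_neg hk1, if_pos h4]
    rw [h1, h2]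
    by_cases hi1 : i ≤ 1
    · rw [if_pos hi1, Polynomial.degree_X]
      exact_mod_cast (by omega : (1:ℕ) ≤ 1 + k/4 - (k-2+2*i)/4)
    · rw [if_neg hi1, Polynomial.degree_one]
      exact_mod_cast (by omega : (0:ℕ) ≤ 1 + k/4 - (k-2+2*i)/4)
  · have hk4 : 4 ≤ k := by omega
    have h2 : tg k i = k - 4 + 2*i := by unfold tg; rw [if_neg (by omega), if_neg h4]
    have h1 : co k i = if i ≤ 1 then Polynomial.X^2 else Polynomial.X := by
      unfold co; rw [if_neg hk0, if_neg hk1, if_neg h4]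
    rw [h1, h2]
    by_cases hi1 : i ≤ 1
    · rw [if_pos hi1, Polynomial.degree_X_pow]
      exact_mod_cast (by omega : (2:ℕ) ≤ 1 + k/4 - (k-4+2*i)/4)
    · rw [if_neg hi1, Polynomial.degree_X]
      exact_mod_cast (by omega : (1:ℕ) ≤ 1 + k/4 - (k-4+2*i)/4)

lemma cpoly_deg (k l : ℕ) :
    (cpoly k l).degree ≤ (((1 + k/4 - l/4 : ℕ)) : WithBot ℕ) := by
  unfold cpoly
  refine le_trans (Polynomial.degree_sum_le _ _) (Finset.sup_le fun i hi => ?_)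
  have hi4 : i < 4 := Finset.mem_range.mp hi
  by_cases h : l = tg k i
  · rw [if_pos h, h]
    exact co_deg_bound k i hi4
  · rw [if_neg h, Polynomial.degree_zero]; exact bot_le

lemma pf_deg (ν k : ℕ) : (pf ν k).degree < (((ν+1 - k/4 : ℕ)) : WithBot ℕ) := by
  induction ν generalizing k with
  | zero =>
    show (if k < 4 then (1:Polynomial ℤ) else 0).degree < _
    split_ifs with h
    · rw [Polynomial.degree_one, show k/4 = 0 by omega]
      exact_mod_cast Nat.zero_lt_one
    · rw [Polynomial.degree_zero]; exact WithBot.bot_lt_coe _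
  | succ ν ih =>
    show (∑ x ∈ Finset.range (4*ν+4), pf ν x * cpoly x k).degree < _
    refine lt_of_le_of_lt (Polynomial.degree_sum_le _ _) ?_
    rw [Finset.sup_lt_iff (WithBot.bot_lt_coe _)]
    intro x _
    by_cases hc : cpoly x k = 0
    · rw [hc, mul_zero, Polynomial.degree_zero]; exact WithBot.bot_lt_coe _
    by_cases hp : pf ν x = 0
    · rw [hp, zero_mul, Polynomial.degree_zero]; exact WithBot.bot_lt_coe _
    have hl : k ≤ x + 4 := by
      by_contra hcon; exact hc (cpoly_eq_zero x k (by omega))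
    have h1 := ih x
    have h2 := cpoly_deg x k
    refine lt_of_le_of_lt (Polynomial.degree_mul_le _ _) ?_
    rw [Polynomial.degree_eq_natDegree hp] at h1 ⊢
    rw [Polynomial.degree_eq_natDegree hc] at h2 ⊢
    have h1' : (pf ν x).natDegree < ν + 1 - x/4 := by exact_mod_cast h1
    have h2' : (cpoly x k).natDegree ≤ 1 + x/4 - k/4 := by exact_mod_cast h2
    have hgoal : (pf ν x).natDegree + (cpoly x k).natDegree < ν + 1 + 1 - k/4 := by omega
    exact_mod_cast hgoal

section Main
variable {H : Type*} [Ring H] [Algebra (LaurentPolynomial ℤ) H]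
variable (a b : H) (q : LaurentPolynomial ℤ)

lemma main_key (hq : Polynomial.toLaurent (Polynomial.X : Polynomial ℤ) = q)
    (haa : a*a = q•(1:H) + (q-1)•a) (hbb : b*b = q•(1:H) + (q-1)•b) (ν : ℕ) :
    ((List.range (2*(ν+1))).map (fun k => if Even k then 1+a else 1+b)).prod
      = ∑ l ∈ Finset.range (4*ν+4), Polynomial.toLaurent (pf ν l) • Zel a b l := by
  induction ν with
  | zero =>
    have hr : List.range 2 = [0, 1] := rfl
    rw [show 2*(0+1) = 2 by norm_num, hr]
    simp only [List.map_cons, List.map_nil, List.prod_cons, List.prod_nil, mul_one]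
    norm_num
    rw [sum_range_four]
    norm_num [pf]
    have h0 := expand0 a b q haa hbb
    rw [Zel_zero a b, one_mul] at h0
    simpa [add_assoc, Zel_zero] using h0
  | succ ν ih =>
    rw [show 2*(ν+1+1) = 2*(ν+1)+1+1 by omega, List.range_succ, List.range_succ]
    rw [List.map_append, List.map_append, List.prod_append, List.prod_append]
    simp only [List.map_cons, List.map_nil, List.prod_cons, List.prod_nil, mul_one]
    have he : Even (2*(ν+1)) := ⟨ν+1, by ring⟩
    have ho : ¬ Even (2*(ν+1)+1) := by rw [Nat.even_iff]; omega
    rw [if_pos he, if_neg ho, ih, mul_assoc, Finset.sum_mul]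
    have step : ∀ k ∈ Finset.range (4*ν+4),
        (Polynomial.toLaurent (pf ν k) • Zel a b k) * ((1+a)*(1+b))
          = ∑ l ∈ Finset.range (4*ν+8),
              (Polynomial.toLaurent (pf ν k) * Polynomial.toLaurent (cpoly k l)) • Zel a b l := by
      intro k hk
      rw [smul_mul_assoc, Zel_mul_G a b q hq haa hbb k (4*ν+8)
        (by have := Finset.mem_range.mp hk; omega), Finset.smul_sum]
      exact Finset.sum_congr rfl fun l _ => by rw [smul_smul]
    rw [Finset.sum_congr rfl step, Finset.sum_comm,
      show 4*(ν+1)+4 = 4*ν+8 by omega]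
    refine Finset.sum_congr rfl fun l _ => ?_
    rw [← Finset.sum_smul]
    congr 1
    show _ = Polynomial.toLaurent (∑ k ∈ Finset.range (4*ν+4), pf ν k * cpoly k l)
    rw [map_sum]
    exact Finset.sum_congr rfl fun k _ => (map_mul _ _ _).symm

end Main


/-- In the Hecke algebra of a dihedral Coxeter system with
`m(s,r) = m < ∞`, for every `n ≥ 1` the alternating product
`(1+T_s)(1+T_r)⋯` with `2n` factors equals `∑_{j=0}^{4n-1} p_{j,n} Z_j`,
where each `p_{j,n} ∈ ℤ[q]` has degree `< n - ⌊j/4⌋` and `p_{4n-1,n} = 1`. -/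
theorem stmt2
    (B W : Type) [Group W] (M : CoxeterMatrix B) (cs : CoxeterSystem M W)
    (i j : B) (hij : i ≠ j) (hdihedral : ∀ b : B, b = i ∨ b = j)
    (m : ℕ) (hm : M.M i j = m) (hmfin : 0 < m)
    (H : Type) [Ring H] [Algebra (LaurentPolynomial ℤ) H]
    (q : LaurentPolynomial ℤ) (hq : q = LaurentPolynomial.T 1)
    (T : Module.Basis W (LaurentPolynomial ℤ) H)
    (hT1 : T 1 = 1)
    (hmul_lt : ∀ (b : B) (w : W), cs.length w < cs.length (cs.simple b * w) →
      T (cs.simple b) * T w = T (cs.simple b * w))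
    (hmul_gt : ∀ (b : B) (w : W), cs.length (cs.simple b * w) < cs.length w →
      T (cs.simple b) * T w = q • T (cs.simple b * w) + (q - 1) • T w)
    (Z : ℕ → H) (hZ : Z = Zel (T (cs.simple i)) (T (cs.simple j)))
    (n : ℕ) (hn : 1 ≤ n) :
    ∃ p : ℕ → Polynomial ℤ,
      ((List.range (2 * n)).map
          (fun k => if Even k then 1 + T (cs.simple i) else 1 + T (cs.simple j))).prod
        = ∑ k ∈ Finset.range (4 * n), (Polynomial.toLaurent (p k)) • Z k ∧
      (∀ k < 4 * n, (p k).degree < ((n - k / 4 : ℕ) : WithBot ℕ)) ∧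
      p (4 * n - 1) = 1 := by
  obtain ⟨ν, rfl⟩ : ∃ ν, n = ν + 1 := ⟨n-1, by omega⟩
  have haa : T (cs.simple i) * T (cs.simple i)
      = q•(1:H) + (q-1)•(T (cs.simple i)) := by
    have hlen : cs.length (cs.simple i * cs.simple i) < cs.length (cs.simple i) := by
      rw [cs.simple_mul_simple_self, cs.length_one, cs.length_simple]; norm_num
    have := hmul_gt i (cs.simple i) hlen
    rwa [cs.simple_mul_simple_self, hT1] at this
  have hbb : T (cs.simple j) * T (cs.simple j)
      = q•(1:H) + (q-1)•(T (cs.simple j)) := by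
    have hlen : cs.length (cs.simple j * cs.simple j) < cs.length (cs.simple j) := by
      rw [cs.simple_mul_simple_self, cs.length_one, cs.length_simple]; norm_num
    have := hmul_gt j (cs.simple j) hlen
    rwa [cs.simple_mul_simple_self, hT1] at this
  have hq' : Polynomial.toLaurent (Polynomial.X : Polynomial ℤ) = q := by
    rw [hq, Polynomial.toLaurent_X]
  refine ⟨pf ν, ?_, ?_, ?_⟩
  · rw [hZ, show 4*(ν+1) = 4*ν+4 by omega]
    exact main_key _ _ q hq' haa hbb ν
  · intro k _
    exact pf_deg ν k
  · rw [show 4*(ν+1)-1 = 4*ν+3 by omega]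
    exact pf_top ν
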